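/- Let m, n, A be positive reals with m > 1, n > m - 1, n ≤ m, and A > ((m-1)/(n-m+1))^(1/n). Define φ(γ) = γ^m * (1 + A^n) / (1 + γ^n * A^n) and B = A * ((n * A^n)/((m-1)*(1 + A^n)))^(1/(n-m+1)). Then φ(γ) > γ for all γ in the half-open interval [A/B, 1). -/
import Mathlib


theorem stmt_2 (m n A B : ℝ) (φ : ℝ → ℝ) (hA : 0 < A) (hm : 1 < m) (hn : 0 < n)
    (hnm : n > m - 1) (hnm' : n ≤ m)
    (hAbig : A > ((m - 1) / (n - m + 1)) ^ (1 / n))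
    (hB : B = A * ((n * A ^ n) / ((m - 1) * (1 + A ^ n))) ^ (1 / (n - m + 1)))
    (hφ : ∀ γ : ℝ, φ γ = γ ^ m * (1 + A ^ n) / (1 + γ ^ n * A ^ n)) :
    ∀ γ : ℝ, A / B ≤ γ → γ < 1 → φ γ > γ := by
  have hp : 0 < n - m + 1 := by linarith
  set C := A ^ n with hCdef
  have hC0 : 0 < C := Real.rpow_pos_of_pos hA n
  have hm1 : 0 < m - 1 := by linarith
  have hfrac : 0 < (m - 1) / (n - m + 1) := div_pos hm1 hp
  -- C > (m-1)/(n-m+1)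
  have hCgt : (m - 1) / (n - m + 1) < C := by
    have h1 := Real.rpow_lt_rpow (Real.rpow_pos_of_pos hfrac (1/n)).le hAbig hn
    rwa [← Real.rpow_mul hfrac.le, one_div, inv_mul_cancel₀ hn.ne', Real.rpow_one] at h1
  have hkey : (m - 1) * (1 + C) < n * C := by
    have h2 : m - 1 < C * (n - m + 1) := (div_lt_iff₀ hp).mp hCgt
    nlinarith
  set K : ℝ := (m - 1) * (1 + C) / (n * C) with hKdef
  have hK0 : 0 < K := div_pos (by nlinarith) (by nlinarith)
  have hK1 : K < 1 := (div_lt_one (by nlinarith)).mpr hkey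
  -- A / B = K ^ (1/(n-m+1))
  have hAB : A / B = K ^ (1 / (n - m + 1)) := by
    have hKinv : (n * C) / ((m - 1) * (1 + C)) = K⁻¹ := by
      rw [hKdef]; field_simp
    have hKp : 0 < K ^ (1 / (n - m + 1)) := Real.rpow_pos_of_pos hK0 _
    rw [hB, hKinv, Real.inv_rpow hK0.le]
    field_simp
  have hAB0 : 0 < A / B := by rw [hAB]; exact Real.rpow_pos_of_pos hK0 _
  have hAB1 : A / B < 1 := by
    rw [hAB]; exact Real.rpow_lt_one hK0.le hK1 (by positivity)
  -- the auxiliary function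
  set f : ℝ → ℝ := fun x => x ^ (m - 1) * (1 + C) - (1 + x ^ n * C) with hfdef
  have hf1 : f 1 = 0 := by simp [hfdef]
  -- strict antitone on [A/B, 1]
  have hanti : StrictAntiOn f (Set.Icc (A / B) 1) := by
    apply strictAntiOn_of_deriv_neg (convex_Icc _ _)
    · intro x hx
      have hx0 : x ≠ 0 := (lt_of_lt_of_le hAB0 hx.1).ne'
      exact (((Real.continuousAt_rpow_const x (m - 1) (Or.inl hx0)).mul
        continuousAt_const).sub (continuousAt_const.add
        ((Real.continuousAt_rpow_const x n (Or.inl hx0)).mul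
          continuousAt_const))).continuousWithinAt
    · intro x hx
      rw [interior_Icc] at hx
      have hx0 : 0 < x := lt_trans hAB0 hx.1
      have h1 : HasDerivAt f ((m - 1) * x ^ (m - 1 - 1) * (1 + C) -
          (n * x ^ (n - 1) * C)) x := by
        exact ((Real.hasDerivAt_rpow_const (Or.inl hx0.ne')).mul_const _).sub
          (((Real.hasDerivAt_rpow_const (Or.inl hx0.ne')).mul_const _).const_add 1)
      rw [h1.deriv]
      -- show (m-1) * x^(m-2) * (1+C) < n * x^(n-1) * C
      have hxp : x ^ (-(n - m + 1)) < K⁻¹ := by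
        have h3 : x ^ (-(n - m + 1)) < (A / B) ^ (-(n - m + 1)) :=
          Real.rpow_lt_rpow_of_neg hAB0 hx.1 (by linarith)
        have h4 : (A / B) ^ (-(n - m + 1)) = K⁻¹ := by
          rw [hAB, ← Real.rpow_mul hK0.le,
            show (1 / (n - m + 1)) * (-(n - m + 1)) = -1 by field_simp,
            Real.rpow_neg_one]
        rwa [h4] at h3
      have hsplit : x ^ (m - 1 - 1) = x ^ (n - 1) * x ^ (-(n - m + 1)) := by
        rw [← Real.rpow_add hx0]; ring_nf
      have hxn1 : 0 < x ^ (n - 1) := Real.rpow_pos_of_pos hx0 _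
      have hKval : (m - 1) * (1 + C) * K⁻¹ = n * C := by
        rw [hKdef]; field_simp
      have h5 : (m - 1) * (1 + C) * x ^ (-(n - m + 1)) < n * C := by
        calc (m - 1) * (1 + C) * x ^ (-(n - m + 1))
            < (m - 1) * (1 + C) * K⁻¹ := by
              apply mul_lt_mul_of_pos_left hxp (by nlinarith)
          _ = n * C := hKval
      rw [hsplit]
      nlinarith [mul_lt_mul_of_pos_left h5 hxn1]
  -- conclude
  intro γ hγ1 hγ2
  have hγ0 : 0 < γ := lt_of_lt_of_le hAB0 hγ1
  have hmem1 : γ ∈ Set.Icc (A / B) 1 := ⟨hγ1, hγ2.le⟩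
  have hmem2 : (1 : ℝ) ∈ Set.Icc (A / B) 1 := ⟨hAB1.le, le_refl _⟩
  have hfγ : 0 < f γ := by
    have := hanti hmem1 hmem2 hγ2
    rwa [hf1] at this
  have hd : 0 < 1 + γ ^ n * C := by positivity
  rw [hφ, gt_iff_lt, lt_div_iff₀ hd]
  have hγm : γ ^ m = γ ^ (m - 1) * γ := by
    have h := Real.rpow_add hγ0 (m - 1) 1
    rw [Real.rpow_one] at h
    rw [show m = m - 1 + 1 by ring, h]; ring_nf
  rw [hγm]
  have hfγ' : 1 + γ ^ n * C < γ ^ (m - 1) * (1 + C) := by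
    simp only [hfdef] at hfγ; linarith
  nlinarith
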